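/- arXiv:0906.3784 — 2 statements merged into one kernel-verified Lean document; each statement's English description precedes it below -/
import Mathlib

section
/- Point-picking lemma: Let X be a metric space, T > 0, and let F : X × (0,T] → ℝ be a function. Fix x₀ ∈ X, A > 0, ε > 0 with the property that F is bounded on the closed ball B̄(x₀, (2A+c)ε) × (0,T] for some constant c > 0 (boundedness on compact sets). Suppose there exists (x, t) ∈ B(x₀, cε) × (0,T] with F(x,t) > ε⁻². Then there exists (x̄, t̄) ∈ B(x₀, (2A+c)ε) × (0,T] with Q̄ := F(x̄, t̄) > ε⁻² such that F(y,s) ≤ 4Q̄ for all (y,s) ∈ B(x̄, A·Q̄^{-1/2}) × (0, t̄]. -/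
/-- Abstract point-picking lemma (Claim A). -/
theorem point_picking_lemma {X : Type*} [MetricSpace X] (T A ε c : ℝ)
    (hT : 0 < T) (hA : 0 < A) (hε : 0 < ε) (hc : 0 < c)
    (F : X → ℝ → ℝ) (x₀ : X)
    (hbdd : ∃ M : ℝ, ∀ y ∈ Metric.closedBall x₀ ((2 * A + c) * ε),
      ∀ s ∈ Set.Ioc (0:ℝ) T, F y s ≤ M)
    (hstart : ∃ x ∈ Metric.ball x₀ (c * ε), ∃ t ∈ Set.Ioc (0:ℝ) T, ε⁻¹ ^ 2 < F x t) :
    ∃ xb ∈ Metric.ball x₀ ((2 * A + c) * ε), ∃ tb ∈ Set.Ioc (0:ℝ) T,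
      ε⁻¹ ^ 2 < F xb tb ∧
      ∀ y ∈ Metric.ball xb (A / Real.sqrt (F xb tb)), ∀ s ∈ Set.Ioc (0:ℝ) tb,
        F y s ≤ 4 * F xb tb := by
  obtain ⟨M, hM⟩ := hbdd
  obtain ⟨x, hx, t, ht, hFx⟩ := hstart
  obtain ⟨N, hN⟩ : ∃ N : ℕ, M * ε ^ 2 < 4 ^ N :=
    pow_unbounded_of_one_lt _ (by norm_num)
  have key : ∀ j : ℕ, ∀ n : ℕ, N ≤ n + j → ∀ x : X, ∀ t : ℝ, t ∈ Set.Ioc (0:ℝ) T →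
      dist x₀ x < c * ε + 2 * A * ε * (1 - (2:ℝ)⁻¹ ^ n) → 4 ^ n * ε⁻¹ ^ 2 < F x t →
      ∃ xb ∈ Metric.ball x₀ ((2 * A + c) * ε), ∃ tb ∈ Set.Ioc (0:ℝ) T,
        ε⁻¹ ^ 2 < F xb tb ∧
        ∀ y ∈ Metric.ball xb (A / Real.sqrt (F xb tb)), ∀ s ∈ Set.Ioc (0:ℝ) tb,
          F y s ≤ 4 * F xb tb := by
    intro j
    induction j with
    | zero =>
      intro n hn x t htT hdist hF
      exfalso
      have hp0 : (0:ℝ) < (2:ℝ)⁻¹ ^ n := by positivity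
      have hxcb : x ∈ Metric.closedBall x₀ ((2 * A + c) * ε) := by
        rw [Metric.mem_closedBall, dist_comm]
        nlinarith [mul_nonneg (mul_nonneg hA.le hε.le) hp0.le]
      have hle : F x t ≤ M := hM x hxcb t htT
      have h4 : (4:ℝ) ^ N ≤ 4 ^ n := pow_le_pow_right₀ (by norm_num) (by omega)
      have hM' : M < 4 ^ N * ε⁻¹ ^ 2 := by
        rw [show (4:ℝ) ^ N * ε⁻¹ ^ 2 = 4 ^ N / ε ^ 2 by field_simp,
          lt_div_iff₀ (by positivity)]
        linarith
      have h5 : (4:ℝ) ^ N * ε⁻¹ ^ 2 ≤ 4 ^ n * ε⁻¹ ^ 2 :=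
        mul_le_mul_of_nonneg_right h4 (by positivity)
      linarith
    | succ j ih =>
      intro n hn x t htT hdist hF
      have hp0 : (0:ℝ) < (2:ℝ)⁻¹ ^ n := by positivity
      have hp1 : ((2:ℝ)⁻¹) ^ n ≤ 1 := pow_le_one₀ (by norm_num) (by norm_num)
      have hFpos : 0 < F x t := lt_trans (by positivity) hF
      by_cases hgood : ∀ y ∈ Metric.ball x (A / Real.sqrt (F x t)),
          ∀ s ∈ Set.Ioc (0:ℝ) t, F y s ≤ 4 * F x t
      · refine ⟨x, ?_, t, htT, ?_, hgood⟩
        · rw [Metric.mem_ball, dist_comm]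
          nlinarith [mul_nonneg (mul_nonneg hA.le hε.le) hp0.le]
        · have h1 : (1:ℝ) ≤ 4 ^ n := one_le_pow₀ (by norm_num)
          have h2 : (1:ℝ) * ε⁻¹ ^ 2 ≤ 4 ^ n * ε⁻¹ ^ 2 :=
            mul_le_mul_of_nonneg_right h1 (by positivity)
          linarith
      · push_neg at hgood
        obtain ⟨y, hy, s, hs, hFy⟩ := hgood
        -- radius bound
        have hsqrt : (2:ℝ) ^ n * ε⁻¹ < Real.sqrt (F x t) := by
          have h4n : (4:ℝ) ^ n = (2 ^ n) ^ 2 := by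
            rw [show (4:ℝ) = 2 ^ 2 by norm_num, ← pow_mul, mul_comm, pow_mul]
          rw [show (4:ℝ) ^ n * ε⁻¹ ^ 2 = ((2:ℝ) ^ n * ε⁻¹) ^ 2 by
            rw [h4n]; ring] at hF
          have := Real.sqrt_lt_sqrt (by positivity) hF
          rwa [Real.sqrt_sq (by positivity)] at this
        have hrad : A / Real.sqrt (F x t) < A * ε * (2:ℝ)⁻¹ ^ n := by
          have h2 : (0:ℝ) < (2:ℝ) ^ n * ε⁻¹ := by positivity
          have := div_lt_div_of_pos_left hA h2 hsqrt
          calc A / Real.sqrt (F x t) < A / ((2:ℝ) ^ n * ε⁻¹) := this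
            _ = A * ε * (2:ℝ)⁻¹ ^ n := by
                rw [inv_pow]
                field_simp
        have hdisty : dist x₀ y < c * ε + 2 * A * ε * (1 - (2:ℝ)⁻¹ ^ (n + 1)) := by
          have h1 : dist x₀ y ≤ dist x₀ x + dist x y := dist_triangle _ _ _
          have h2 : dist x y < A / Real.sqrt (F x t) := Metric.mem_ball'.mp hy
          rw [pow_succ]
          linarith
        have hFy' : 4 ^ (n + 1) * ε⁻¹ ^ 2 < F y s := by
          rw [pow_succ]
          linarith
        exact ih (n + 1) (by omega) y s ⟨hs.1, le_trans hs.2 htT.2⟩ hdisty hFy'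
  have hdist0 : dist x₀ x < c * ε + 2 * A * ε * (1 - (2:ℝ)⁻¹ ^ 0) := by
    rw [Metric.mem_ball, dist_comm] at hx
    simpa using hx
  exact key N 0 (by omega) x t ht hdist0 (by simpa using hFx)
end

section
/- Evolution inequality for the localized curvature quantity: Suppose u = h·|Rm|² where h ≥ 0 satisfies (∂ₜ − Δ)h ≤ (10/b²)h and |∇h| ≤ (√10/b)·h^{1/2}, and |Rm|² satisfies (∂ₜ − Δ)|Rm|² ≤ −2|∇Rm|² + 16|Rm|³, with |Rm| ≤ 4 on the support of h. Then (∂ₜ − Δ)u ≤ (10/b² + 64)·u + 320/b². -/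
/-- Pointwise algebraic form of the evolution inequality for `u = h·|Rm|²`.
Here `h` is the cutoff value, `R = |Rm|`, `N = |∇Rm|`, `Ph = (∂ₜ-Δ)h`,
`Gh = |∇h|`, `PR = (∂ₜ-Δ)|Rm|²`. -/
theorem localized_curvature_evolution_inequality (b h R N Ph Gh PR : ℝ)
    (hb : 0 < b) (hh : h ∈ Set.Icc (0:ℝ) 1) (hR : R ∈ Set.Icc (0:ℝ) 4)
    (hN : 0 ≤ N) (hGh0 : 0 ≤ Gh)
    (hPh : Ph ≤ 10 / b ^ 2 * h)
    (hGh : Gh ≤ Real.sqrt 10 / b * Real.sqrt h)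
    (hPR : PR ≤ -2 * N ^ 2 + 16 * R ^ 3) :
    Ph * R ^ 2 + h * PR + 2 * Gh * (2 * R * N) ≤
      (10 / b ^ 2 + 64) * (h * R ^ 2) + 320 / b ^ 2 := by
  obtain ⟨hh0, hh1⟩ := hh
  obtain ⟨hR0, hR4⟩ := hR
  have hs : Real.sqrt h ^ 2 = h := Real.sq_sqrt hh0
  have h10 : Real.sqrt 10 ^ 2 = 10 := Real.sq_sqrt (by norm_num)
  have hd : 0 ≤ 10 / b ^ 2 := by positivity
  have A : Ph * R ^ 2 ≤ 10 / b ^ 2 * h * R ^ 2 :=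
    mul_le_mul_of_nonneg_right hPh (sq_nonneg R)
  have B : h * PR ≤ -2 * (h * N ^ 2) + 16 * (h * R ^ 3) := by
    have := mul_le_mul_of_nonneg_left hPR hh0; linarith [this]; 
  have expand : (Real.sqrt h * N - Real.sqrt 10 / b * R) ^ 2 =
      h * N ^ 2 - 2 * (Real.sqrt 10 / b * Real.sqrt h) * (R * N) + 10 / b ^ 2 * R ^ 2 := by
    rw [sub_sq, mul_pow, mul_pow, hs, div_pow, h10]; ring
  have cross : 0 ≤ h * N ^ 2 - 2 * (Real.sqrt 10 / b * Real.sqrt h) * (R * N)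
      + 10 / b ^ 2 * R ^ 2 := expand ▸ sq_nonneg _
  have C : 2 * Gh * (2 * R * N) ≤ 2 * (h * N ^ 2) + 2 * (10 / b ^ 2 * R ^ 2) := by
    have h1 : 2 * Gh * (2 * R * N) ≤ 2 * (Real.sqrt 10 / b * Real.sqrt h) * (2 * R * N) :=
      mul_le_mul_of_nonneg_right (by linarith) (by positivity)
    nlinarith [cross]
  have D1 : 16 * (h * R ^ 3) ≤ 64 * (h * R ^ 2) := by nlinarith [mul_nonneg hh0 (sq_nonneg R)]
  have D2 : 2 * (10 / b ^ 2 * R ^ 2) ≤ 320 / b ^ 2 := by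
    have hR2 : R ^ 2 ≤ 16 := by nlinarith
    have : 10 / b ^ 2 * R ^ 2 ≤ 10 / b ^ 2 * 16 := mul_le_mul_of_nonneg_left hR2 hd
    have e : 10 / b ^ 2 * 16 = 160 / b ^ 2 := by ring
    have e2 : 320 / b ^ 2 = 2 * (160 / b ^ 2) := by ring
    linarith [this, e, e2]
  have E1 : 10 / b ^ 2 * h * R ^ 2 = 10 / b ^ 2 * (h * R ^ 2) := by ring
  have E2 : (10 / b ^ 2 + 64) * (h * R ^ 2) = 10 / b ^ 2 * (h * R ^ 2) + 64 * (h * R ^ 2) := by ring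
  linarith [A, B, C, D1, D2, E1, E2]
end
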